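/- Let γ > 4 and m > 0. Let I and J be finite index sets, let c_u > 0, and for i ∈ I, j ∈ J let c_i > 0, d_j > 0, v_i ≥ 0 and a_{ij} ≥ 0 be real numbers satisfying: (1) ∑_{j∈J} a_{ij}/(c_i·d_j) ≤ v_i for every i; (2) with M := ∑_{i∈I}∑_{j∈J} a_{ij}/(c_u·d_j), one has v_i ≤ M/γ for every i for which a_{ij} > 0 for some j; (3) d_j ≤ c_u for every j for which a_{ij} > 0 for some i; and (4) ∑_{i∈I}∑_{j∈J} a_{ij} ≥ m. Then c_u·√M + ∑_{i∈I} c_i·√(v_i − ∑_{j∈J} a_{ij}/(c_i·d_j)) − ∑_{i∈I} c_i·√(v_i) ≤ −(√γ/2 − 1)·√m. -/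

import Mathlib

open Finset

/-- Potential decrease for the `3`-increasing potential `Φ_{1/2}` during a `γ`-move:
with `M := ∑_{i,j} a_{ij}/(c_u·d_j)`, under the stated conditions,
`c_u·√M + ∑_i c_i·√(v_i − ∑_j a_{ij}/(c_i·d_j)) − ∑_i c_i·√v_i ≤ −(√γ/2 − 1)·√m`. -/
theorem sqrt_potential_gamma_move_decrease (γ m : ℝ) (hγ : 4 < γ) (hm : 0 < m)
    {ι κ : Type*} (I : Finset ι) (J : Finset κ)
    (cu : ℝ) (hcu : 0 < cu)
    (c : ι → ℝ) (d : κ → ℝ) (v : ι → ℝ) (a : ι → κ → ℝ)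
    (hc : ∀ i ∈ I, 0 < c i) (hd : ∀ j ∈ J, 0 < d j)
    (hv : ∀ i ∈ I, 0 ≤ v i) (ha : ∀ i ∈ I, ∀ j ∈ J, 0 ≤ a i j)
    (h1 : ∀ i ∈ I, ∑ j ∈ J, a i j / (c i * d j) ≤ v i)
    (h2 : ∀ i ∈ I, (∃ j ∈ J, 0 < a i j) →
      v i ≤ (∑ i' ∈ I, ∑ j ∈ J, a i' j / (cu * d j)) / γ)
    (h3 : ∀ j ∈ J, (∃ i ∈ I, 0 < a i j) → d j ≤ cu)
    (h4 : m ≤ ∑ i ∈ I, ∑ j ∈ J, a i j) :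
    cu * Real.sqrt (∑ i ∈ I, ∑ j ∈ J, a i j / (cu * d j))
        + ∑ i ∈ I, c i * Real.sqrt (v i - ∑ j ∈ J, a i j / (c i * d j))
        - ∑ i ∈ I, c i * Real.sqrt (v i)
      ≤ -(Real.sqrt γ / 2 - 1) * Real.sqrt m := by
  have hγ0 : (0:ℝ) < γ := by linarith
  set M : ℝ := ∑ i ∈ I, ∑ j ∈ J, a i j / (cu * d j) with hMdef
  set s : ι → ℝ := fun i => ∑ j ∈ J, a i j / (c i * d j) with hsdef
  have hsnn : ∀ i ∈ I, 0 ≤ s i := by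
    intro i hi
    apply Finset.sum_nonneg
    intro j hj
    have := hc i hi; have := hd j hj
    exact div_nonneg (ha i hi j hj) (by positivity)
  -- Step A : m ≤ cu^2 * M
  have hstepA : m ≤ cu ^ 2 * M := by
    have : (∑ i ∈ I, ∑ j ∈ J, a i j) ≤ cu ^ 2 * M := by
      rw [hMdef, Finset.mul_sum]
      apply Finset.sum_le_sum
      intro i hi
      rw [Finset.mul_sum]
      apply Finset.sum_le_sum
      intro j hj
      rcases eq_or_lt_of_le (ha i hi j hj) with h | h
      · rw [← h]; simp
      · have hdj := hd j hj
        have hjc : d j ≤ cu := h3 j hj ⟨i, hi, h⟩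
        have heq : cu ^ 2 * (a i j / (cu * d j)) = a i j * (cu / d j) := by
          field_simp
        rw [heq]
        have h1' : (1:ℝ) ≤ cu / d j := (one_le_div hdj).2 hjc
        nlinarith
    linarith
  have hMpos : 0 < M := by nlinarith
  have hsqM : 0 < Real.sqrt M := Real.sqrt_pos.2 hMpos
  -- Step B : per-index inequality
  have hstepB : ∀ i ∈ I,
      Real.sqrt γ * (c i * s i)
        ≤ 2 * Real.sqrt M * (c i * (Real.sqrt (v i) - Real.sqrt (v i - s i))) := by
    intro i hi
    have hsv : s i ≤ v i := h1 i hi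
    have hvi : 0 ≤ v i := hv i hi
    have hci := hc i hi
    rcases eq_or_lt_of_le (hsnn i hi) with h0 | hspos
    · rw [← h0]; simp
    · -- some a i j > 0
      have hex : ∃ j ∈ J, 0 < a i j := by
        by_contra hcon
        push_neg at hcon
        have : s i = 0 := by
          apply Finset.sum_eq_zero
          intro j hj
          have := le_antisymm (hcon j hj) (ha i hi j hj)
          rw [this]; simp
        linarith
      have hvM : v i ≤ M / γ := h2 i hi hex
      set A := Real.sqrt (v i) with hA
      set B := Real.sqrt (v i - s i) with hB
      have hA2 : A ^ 2 = v i := Real.sq_sqrt hvi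
      have hB2 : B ^ 2 = v i - s i := Real.sq_sqrt (by linarith)
      have hBA : B ≤ A := Real.sqrt_le_sqrt (by linarith)
      have hBnn : 0 ≤ B := Real.sqrt_nonneg _
      have hAle : A ≤ Real.sqrt (M / γ) := Real.sqrt_le_sqrt hvM
      have hmul : Real.sqrt γ * Real.sqrt (M / γ) = Real.sqrt M := by
        rw [← Real.sqrt_mul hγ0.le]
        congr 1
        field_simp
      have hγnn : (0:ℝ) ≤ Real.sqrt γ := Real.sqrt_nonneg _
      have hcore : Real.sqrt γ * s i ≤ 2 * Real.sqrt M * (A - B) := by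
        have hs_eq : s i = (A - B) * (A + B) := by nlinarith
        nlinarith [mul_le_mul_of_nonneg_left hAle (mul_nonneg hγnn (sub_nonneg.2 hBA)),
          mul_nonneg (sub_nonneg.2 hBA) hγnn]
      calc Real.sqrt γ * (c i * s i) = c i * (Real.sqrt γ * s i) := by ring
        _ ≤ c i * (2 * Real.sqrt M * (A - B)) :=
            mul_le_mul_of_nonneg_left hcore hci.le
        _ = 2 * Real.sqrt M * (c i * (A - B)) := by ring
  -- sum the per-index inequalities
  have hsum_cs : ∑ i ∈ I, c i * s i = cu * M := by
    rw [hMdef, Finset.mul_sum]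
    apply Finset.sum_congr rfl
    intro i hi
    rw [hsdef, Finset.mul_sum, Finset.mul_sum]
    apply Finset.sum_congr rfl
    intro j hj
    have hci := (hc i hi).ne'
    have hdj := (hd j hj).ne'
    field_simp
  have hsumB : Real.sqrt γ * (cu * M)
      ≤ 2 * Real.sqrt M *
        ((∑ i ∈ I, c i * Real.sqrt (v i)) - ∑ i ∈ I, c i * Real.sqrt (v i - s i)) := by
    have := Finset.sum_le_sum hstepB
    rw [← Finset.mul_sum, ← Finset.mul_sum, hsum_cs] at this
    calc Real.sqrt γ * (cu * M)
        ≤ 2 * Real.sqrt M * ∑ i ∈ I, c i * (Real.sqrt (v i) - Real.sqrt (v i - s i)) := this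
      _ = _ := by rw [← Finset.sum_sub_distrib]; congr 1; apply Finset.sum_congr rfl
                  intro i _; ring
  -- finishing
  have hgt2 : (2:ℝ) < Real.sqrt γ := by
    have : Real.sqrt 4 < Real.sqrt γ := Real.sqrt_lt_sqrt (by norm_num) hγ
    rwa [show (4:ℝ) = 2 ^ 2 by norm_num, Real.sqrt_sq (by norm_num)] at this
  have hsqm : Real.sqrt m ≤ cu * Real.sqrt M := by
    have := Real.sqrt_le_sqrt hstepA
    rwa [Real.sqrt_mul (sq_nonneg cu), Real.sqrt_sq hcu.le] at this
  have hMM : Real.sqrt M * Real.sqrt M = M := Real.mul_self_sqrt hMpos.le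
  have hP : Real.sqrt γ * cu * Real.sqrt M / 2
      ≤ (∑ i ∈ I, c i * Real.sqrt (v i)) - ∑ i ∈ I, c i * Real.sqrt (v i - s i) := by
    set P := (∑ i ∈ I, c i * Real.sqrt (v i)) - ∑ i ∈ I, c i * Real.sqrt (v i - s i) with hPdef
    have key : Real.sqrt γ * cu * Real.sqrt M * Real.sqrt M ≤ (2 * P) * Real.sqrt M := by
      calc Real.sqrt γ * cu * Real.sqrt M * Real.sqrt M
          = Real.sqrt γ * (cu * (Real.sqrt M * Real.sqrt M)) := by ring
        _ = Real.sqrt γ * (cu * M) := by rw [hMM]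
        _ ≤ 2 * Real.sqrt M * P := hsumB
        _ = (2 * P) * Real.sqrt M := by ring
    have := le_of_mul_le_mul_right key hsqM
    linarith
  have hsqmnn : (0:ℝ) ≤ Real.sqrt m := Real.sqrt_nonneg _
  nlinarith [mul_nonneg (by linarith : (0:ℝ) ≤ Real.sqrt γ / 2 - 1)
    (by linarith : (0:ℝ) ≤ cu * Real.sqrt M - Real.sqrt m)]
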